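/- Two circle subgroups G(a₁) and G(a₂) of the torus T^k, where aᵢ ∈ ℤ^k are primitive integer vectors and G(a) is the image of the line ℝ·a under the covering projection ℝ^k → T^k = ℝ^k/ℤ^k, intersect trivially if and only if there exist vectors a₃, …, a_k ∈ ℤ^k such that the k×k integer matrix with columns a₁, …, a_k has determinant ±1. -/

import Mathlib

/-- The `k`-torus `T^k = ℝ^k/ℤ^k`, realized coordinatewise. -/
abbrev Torus (k : ℕ) : Type := Fin k → AddCircle (1 : ℝ)

/-- The additive homomorphism `ℝ → T^k`, `t ↦ π(t·a)`, whose range is the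
circle subgroup `G(a)` determined by the integer vector `a`. -/
noncomputable def circleHom {k : ℕ} (a : Fin k → ℤ) : ℝ →+ Torus k :=
  AddMonoidHom.mk' (fun t i => ((t * (a i : ℝ) : ℝ) : AddCircle (1 : ℝ)))
    (fun u v => by
      funext i
      show (((u + v) * (a i : ℝ) : ℝ) : AddCircle (1 : ℝ)) = _
      rw [add_mul]; rfl)

/-- The circle subgroup `G(a) ⊆ T^k`: the image of the line `ℝ·a` under the
covering projection `ℝ^k → T^k`. -/
noncomputable def circleSubgroup {k : ℕ} (a : Fin k → ℤ) : AddSubgroup (Torus k) :=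
  (circleHom a).range

lemma exists_bezout {ι : Type*} (s : Finset ι) (f : ι → ℤ) :
    ∃ c : ι → ℤ, ∑ i ∈ s, c i * f i = s.gcd f := by
  classical
  induction s using Finset.induction_on with
  | empty => exact ⟨0, by simp⟩
  | @insert a s ha ih =>
    obtain ⟨c, hc⟩ := ih
    set g := s.gcd f with hg
    refine ⟨Function.update (fun i => Int.gcdB (f a) g * c i) a (Int.gcdA (f a) g), ?_⟩
    rw [Finset.sum_insert ha, Finset.gcd_insert]
    have hs : ∀ i ∈ s, Function.update (fun i => Int.gcdB (f a) g * c i) a (Int.gcdA (f a) g) i * f i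
        = Int.gcdB (f a) g * (c i * f i) := by
      intro i hi
      rw [Function.update_of_ne (by rintro rfl; exact ha hi)]
      ring
    rw [Finset.sum_congr rfl hs, Function.update_self, ← Finset.mul_sum, hc]
    have hab : (gcd (f a) g : ℤ) = f a * Int.gcdA (f a) g + g * Int.gcdB (f a) g :=
      Int.gcd_eq_gcd_ab (f a) g
    rw [hab]; ring

lemma int_of_mul_int {k : ℕ} {a : Fin k → ℤ} (h : Finset.univ.gcd a = 1) {t : ℝ}
    (hm : ∀ i, ∃ m : ℤ, t * a i = m) : ∃ m : ℤ, t = m := by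
  choose m hm using hm
  obtain ⟨c, hc⟩ := exists_bezout Finset.univ a
  refine ⟨∑ i, c i * m i, ?_⟩
  have h1 : ((∑ i, c i * a i : ℤ) : ℝ) = 1 := by rw [hc, h]; norm_num
  calc t = t * ((∑ i, c i * a i : ℤ) : ℝ) := by rw [h1, mul_one]
    _ = ∑ i, (c i : ℝ) * (t * a i) := by push_cast [Finset.mul_sum]; exact Finset.sum_congr rfl fun i _ => by ring
    _ = ((∑ i, c i * m i : ℤ) : ℝ) := by push_cast; exact Finset.sum_congr rfl fun i _ => by rw [hm i]

lemma key_lemma {k : ℕ} {a₁ a₂ : Fin k → ℤ}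
    (h : circleSubgroup a₁ ⊓ circleSubgroup a₂ = ⊥)
    {t s : ℝ} (hm : ∀ i, ∃ m : ℤ, t * a₁ i - s * a₂ i = m) :
    ∀ i, ∃ m : ℤ, t * a₁ i = m := by
  have hx : circleHom a₁ t = circleHom a₂ s := by
    funext i
    show ((t * a₁ i : ℝ) : AddCircle (1 : ℝ)) = ((s * a₂ i : ℝ) : AddCircle (1 : ℝ))
    rw [QuotientAddGroup.eq_iff_sub_mem]
    obtain ⟨m, hmi⟩ := hm i
    exact ⟨m, by simpa using hmi.symm⟩
  have hmem : circleHom a₁ t ∈ circleSubgroup a₁ ⊓ circleSubgroup a₂ :=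
    ⟨⟨t, rfl⟩, ⟨s, hx.symm⟩⟩
  rw [h, AddSubgroup.mem_bot] at hmem
  intro i
  have h0 : ((t * a₁ i : ℝ) : AddCircle (1 : ℝ)) = 0 := congrFun hmem i
  rw [AddCircle.coe_eq_zero_iff] at h0
  obtain ⟨n, hn⟩ := h0
  exact ⟨n, by simpa using hn.symm⟩


lemma coeff_zero {k : ℕ} {a₁ a₂ : Fin k → ℤ}
    (h : circleSubgroup a₁ ⊓ circleSubgroup a₂ = ⊥)
    (h₁ : Finset.univ.gcd a₁ = 1)
    {m l : ℤ} (hml : m • a₁ + l • a₂ = 0) : m = 0 := by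
  have hcoord : ∀ i, m * a₁ i + l * a₂ i = 0 := fun i => congrFun hml i
  by_contra hm0
  have hkey := key_lemma h (t := 1/2) (s := -l / (2 * m)) (fun i => by
    refine ⟨0, ?_⟩
    have hR : (m : ℝ) * a₁ i + (l : ℝ) * a₂ i = 0 := by
      exact_mod_cast congrArg (Int.cast : ℤ → ℝ) (hcoord i)
    have hmR : (m : ℝ) ≠ 0 := Int.cast_ne_zero.mpr hm0
    push_cast
    field_simp
    linarith)
  obtain ⟨n, hn⟩ := int_of_mul_int h₁ hkey
  have h2 : (2 : ℝ) * n = 1 := by rw [← hn]; norm_num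
  have h3 : (2 * n : ℤ) = 1 := by exact_mod_cast h2
  omega

lemma indep_pair {k : ℕ} {a₁ a₂ : Fin k → ℤ}
    (h : circleSubgroup a₁ ⊓ circleSubgroup a₂ = ⊥)
    (h₁ : Finset.univ.gcd a₁ = 1) (h₂ : Finset.univ.gcd a₂ = 1)
    {m l : ℤ} (hml : m • a₁ + l • a₂ = 0) : m = 0 ∧ l = 0 := by
  have h' : circleSubgroup a₂ ⊓ circleSubgroup a₁ = ⊥ := by rwa [inf_comm] at h
  exact ⟨coeff_zero h h₁ hml, coeff_zero h' h₂ (by rwa [add_comm] at hml)⟩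


lemma backward_dir {k : ℕ} (hk : 2 ≤ k) {a₁ a₂ : Fin k → ℤ}
    (A : Matrix (Fin k) (Fin k) ℤ)
    (hA1 : ∀ i, A i ⟨0, Nat.lt_of_lt_of_le Nat.zero_lt_two hk⟩ = a₁ i) (hA2 : ∀ i, A i ⟨1, Nat.lt_of_lt_of_le Nat.one_lt_two hk⟩ = a₂ i)
    (hdet : A.det = 1 ∨ A.det = -1) :
    circleSubgroup a₁ ⊓ circleSubgroup a₂ = ⊥ := by
  obtain ⟨B, hB⟩ : ∃ B : Matrix (Fin k) (Fin k) ℤ, B * A = 1 := by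
    rcases hdet with hd | hd
    · exact ⟨A.adjugate, by rw [Matrix.adjugate_mul, hd, one_smul]⟩
    · exact ⟨-A.adjugate, by rw [Matrix.neg_mul, Matrix.adjugate_mul, hd, neg_smul, one_smul, neg_neg]⟩
  set i0 : Fin k := ⟨0, by omega⟩
  set i1 : Fin k := ⟨1, by omega⟩
  rw [eq_bot_iff]
  rintro x ⟨⟨t, ht⟩, ⟨s, hs⟩⟩
  rw [AddSubgroup.mem_bot]
  -- coordinatewise integer differences
  have hd : ∀ i, ∃ m : ℤ, t * a₁ i - s * a₂ i = m := by
    intro i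
    have : ((t * a₁ i : ℝ) : AddCircle (1 : ℝ)) = ((s * a₂ i : ℝ) : AddCircle (1 : ℝ)) :=
      congrFun (ht.trans hs.symm) i
    rw [QuotientAddGroup.eq_iff_sub_mem] at this
    obtain ⟨n, hn⟩ := this
    exact ⟨n, by simpa using hn.symm⟩
  choose d hdi using hd
  have h10 : ∑ i, B i0 i * a₁ i = 1 := by
    have := congrFun (congrFun hB i0) i0
    rw [Matrix.mul_apply] at this
    simpa [hA1, Matrix.one_apply] using this
  have h20 : ∑ i, B i0 i * a₂ i = 0 := by
    have := congrFun (congrFun hB i0) i1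
    rw [Matrix.mul_apply] at this
    have hne : i0 ≠ i1 := by simp [i0, i1, Fin.ext_iff]
    simpa [hA2, Matrix.one_apply, hne] using this
  have ht_int : t = ((∑ i, B i0 i * d i : ℤ) : ℝ) := by
    have e1 : ∑ i, (B i0 i : ℝ) * (t * a₁ i - s * a₂ i) = ∑ i, (B i0 i : ℝ) * (d i : ℝ) :=
      Finset.sum_congr rfl fun i _ => by rw [hdi i]
    have e2 : ∑ i, (B i0 i : ℝ) * (t * a₁ i - s * a₂ i)
        = t * ((∑ i, B i0 i * a₁ i : ℤ) : ℝ) - s * ((∑ i, B i0 i * a₂ i : ℤ) : ℝ) := by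
      push_cast [Finset.mul_sum]
      rw [← Finset.sum_sub_distrib]
      exact Finset.sum_congr rfl fun i _ => by ring
    rw [e2, h10, h20] at e1
    push_cast at e1 ⊢
    linarith [e1]
  rw [← ht]
  funext i
  show ((t * a₁ i : ℝ) : AddCircle (1 : ℝ)) = 0
  rw [AddCircle.coe_eq_zero_iff]
  exact ⟨(∑ j, B i0 j * d j) * a₁ i, by rw [ht_int]; push_cast; simp [mul_comm]⟩


lemma forward_dir {k : ℕ} (hk : 2 ≤ k) {a₁ a₂ : Fin k → ℤ}
    (h₁ : Finset.univ.gcd a₁ = 1) (h₂ : Finset.univ.gcd a₂ = 1)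
    (h : circleSubgroup a₁ ⊓ circleSubgroup a₂ = ⊥) :
    ∃ A : Matrix (Fin k) (Fin k) ℤ,
      (∀ i, A i ⟨0, Nat.lt_of_lt_of_le Nat.zero_lt_two hk⟩ = a₁ i) ∧ (∀ i, A i ⟨1, Nat.lt_of_lt_of_le Nat.one_lt_two hk⟩ = a₂ i) ∧
      (A.det = 1 ∨ A.det = -1) := by
  classical
  have h' : circleSubgroup a₂ ⊓ circleSubgroup a₁ = ⊥ := by rwa [inf_comm] at h
  set L : Submodule ℤ (Fin k → ℤ) := Submodule.span ℤ {a₁, a₂} with hL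
  -- the quotient is torsion-free
  haveI : NoZeroSMulDivisors ℤ ((Fin k → ℤ) ⧸ L) := by
    refine ⟨fun {n q} hnq => ?_⟩
    by_cases hn : n = 0
    · exact Or.inl hn
    right
    obtain ⟨x, rfl⟩ := Submodule.mkQ_surjective L q
    rw [← map_smul, Submodule.mkQ_apply, Submodule.Quotient.mk_eq_zero] at hnq
    rw [Submodule.mkQ_apply, Submodule.Quotient.mk_eq_zero]
    obtain ⟨m, l, hml⟩ := Submodule.mem_span_pair.mp hnq
    have hcoord : ∀ i, m * a₁ i + l * a₂ i = n * x i := fun i => congrFun hml i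
    have hnR : (n : ℝ) ≠ 0 := Int.cast_ne_zero.mpr hn
    have hRc : ∀ i, (m : ℝ) * a₁ i + (l : ℝ) * a₂ i = (n : ℝ) * x i := fun i => by
      exact_mod_cast congrArg (Int.cast : ℤ → ℝ) (hcoord i)
    -- m is divisible by n
    obtain ⟨m', hm'⟩ : ∃ m' : ℤ, (m : ℝ) / n = m' := by
      refine int_of_mul_int h₁ (key_lemma h (t := (m : ℝ) / n) (s := -(l : ℝ) / n) ?_)
      intro i
      refine ⟨x i, ?_⟩
      field_simp
      linarith [hRc i]
    obtain ⟨l', hl'⟩ : ∃ l' : ℤ, (l : ℝ) / n = l' := by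
      refine int_of_mul_int h₂ (key_lemma h' (t := (l : ℝ) / n) (s := -(m : ℝ) / n) ?_)
      intro i
      refine ⟨x i, ?_⟩
      field_simp
      linarith [hRc i]
    refine Submodule.mem_span_pair.mpr ⟨m', l', ?_⟩
    funext i
    have hmm : (m : ℝ) = m' * n := by field_simp at hm'; linarith
    have hll : (l : ℝ) = l' * n := by field_simp at hl'; linarith
    have hm2 : m = m' * n := by exact_mod_cast hmm
    have hl2 : l = l' * n := by exact_mod_cast hll
    have := hcoord i
    rw [hm2, hl2] at this
    have : n * (m' * a₁ i + l' * a₂ i) = n * x i := by linarith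
    have := mul_left_cancel₀ hn this
    simpa using this
  haveI : Module.Free ℤ ((Fin k → ℤ) ⧸ L) := Module.free_of_finite_type_torsion_free'
  set Q := (Fin k → ℤ) ⧸ L
  set ι := Module.Free.ChooseBasisIndex ℤ Q
  set c : Module.Basis ι ℤ Q := Module.Free.chooseBasis ℤ Q
  choose q hq using fun i : ι => Submodule.mkQ_surjective L (c i)
  set v : Fin 2 ⊕ ι → (Fin k → ℤ) := Sum.elim ![a₁, a₂] q with hv
  have hva : v (Sum.inl 0) = a₁ := rfl
  have hvb : v (Sum.inl 1) = a₂ := rfl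
  have hmkv : ∀ j : Fin 2, L.mkQ (v (Sum.inl j)) = 0 := by
    intro j
    rw [Submodule.mkQ_apply, Submodule.Quotient.mk_eq_zero]
    fin_cases j
    · exact Submodule.subset_span (Set.mem_insert _ _)
    · exact Submodule.subset_span (Set.mem_insert_of_mem _ rfl)
  have hli : LinearIndependent ℤ v := by
    rw [Fintype.linearIndependent_iff]
    intro g hg
    rw [Fintype.sum_sum_type] at hg
    have hg2 := congrArg L.mkQ hg
    rw [map_add, map_sum, map_sum, map_zero] at hg2
    simp only [map_smul, hmkv, smul_zero, Finset.sum_const_zero, zero_add] at hg2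
    have hqz : ∀ i : ι, g (Sum.inr i) = 0 := by
      have := Fintype.linearIndependent_iff.mp c.linearIndependent (fun i => g (Sum.inr i))
      refine this ?_
      have hq' : ∀ i : ι, (Submodule.Quotient.mk (q i) : Q) = c i := fun i => hq i
      simpa [hv, hq'] using hg2
    have hg3 : g (Sum.inl 0) • a₁ + g (Sum.inl 1) • a₂ = 0 := by
      have : ∑ j : Fin 2, g (Sum.inl j) • v (Sum.inl j) = 0 := by
        simpa [hqz] using hg
      simpa [Fin.sum_univ_two, hva, hvb] using this
    have hz := indep_pair h h₁ h₂ hg3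
    rintro (j | i)
    · fin_cases j
      · exact hz.1
      · exact hz.2
    · exact hqz i
  have hsp : ⊤ ≤ Submodule.span ℤ (Set.range v) := by
    intro x _
    set y : Fin k → ℤ := ∑ i : ι, c.repr (L.mkQ x) i • q i with hy
    have hxy : x - y ∈ L := by
      rw [← Submodule.Quotient.mk_eq_zero, ← Submodule.mkQ_apply, map_sub, hy, map_sum]
      simp only [map_smul, hq]
      rw [c.sum_repr (L.mkQ x)]
      exact sub_self _
    have hLle : L ≤ Submodule.span ℤ (Set.range v) := by
      rw [hL, Submodule.span_le]
      rintro z (rfl | rfl)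
      · exact Submodule.subset_span ⟨Sum.inl 0, rfl⟩
      · exact Submodule.subset_span ⟨Sum.inl 1, rfl⟩
    have hyv : y ∈ Submodule.span ℤ (Set.range v) :=
      Submodule.sum_mem _ fun i _ => Submodule.smul_mem _ _ (Submodule.subset_span ⟨Sum.inr i, rfl⟩)
    have := Submodule.add_mem _ (hLle hxy) hyv
    simpa using this
  set b : Module.Basis (Fin 2 ⊕ ι) ℤ (Fin k → ℤ) := Module.Basis.mk hli hsp
  -- cardinality
  have hcard : Fintype.card (Fin 2 ⊕ ι) = k := by
    have e0 := b.indexEquiv (Pi.basisFun ℤ (Fin k))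
    simpa using Fintype.card_congr e0
  have hcι : Fintype.card ι = k - 2 := by
    simp only [Fintype.card_sum, Fintype.card_fin] at hcard
    omega
  set e : (Fin 2 ⊕ ι) ≃ Fin k :=
    (Equiv.sumCongr (Equiv.refl (Fin 2)) (Fintype.equivFinOfCardEq hcι)).trans
      (finSumFinEquiv.trans (finCongr (by omega)))
  set b' : Module.Basis (Fin k) ℤ (Fin k → ℤ) := b.reindex e
  have he0 : e (Sum.inl 0) = ⟨0, by omega⟩ := by
    simp only [e, Equiv.trans_apply, Equiv.sumCongr_apply, Equiv.refl_apply]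
    apply Fin.ext
    simp [Sum.map, finSumFinEquiv_apply_left]
  have he1 : e (Sum.inl 1) = ⟨1, by omega⟩ := by
    simp only [e, Equiv.trans_apply, Equiv.sumCongr_apply, Equiv.refl_apply]
    apply Fin.ext
    simp [Sum.map, finSumFinEquiv_apply_left]
  have hb'0 : b' ⟨0, by omega⟩ = a₁ := by
    rw [Module.Basis.reindex_apply, ← he0, Equiv.symm_apply_apply, Module.Basis.mk_apply, hva]
  have hb'1 : b' ⟨1, by omega⟩ = a₂ := by
    rw [Module.Basis.reindex_apply, ← he1, Equiv.symm_apply_apply, Module.Basis.mk_apply, hvb]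
  refine ⟨(Pi.basisFun ℤ (Fin k)).toMatrix b', ?_, ?_, ?_⟩
  · intro i
    rw [Module.Basis.toMatrix_apply, Pi.basisFun_repr, hb'0]
  · intro i
    rw [Module.Basis.toMatrix_apply, Pi.basisFun_repr, hb'1]
  · rw [← Int.isUnit_iff]
    have := Module.Basis.toMatrix_mul_toMatrix_flip (Pi.basisFun ℤ (Fin k)) b'
    have hdet := congrArg Matrix.det this
    rw [Matrix.det_mul, Matrix.det_one] at hdet
    exact IsUnit.of_mul_eq_one _ hdet

/-- two circle subgroups `G(a₁)`, `G(a₂)` of `T^k` determined by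
primitive integer vectors `a₁, a₂` intersect trivially if and only if there are
integer vectors `a₃, …, a_k` such that the `k×k` integer matrix with columns
`a₁, …, a_k` has determinant `±1`. -/
theorem circleSubgroups_inf_eq_bot_iff_exists_unimodular_extension
    (k : ℕ) (hk : 2 ≤ k) (a₁ a₂ : Fin k → ℤ)
    (h₁ : Finset.univ.gcd a₁ = 1) (h₂ : Finset.univ.gcd a₂ = 1) :
    circleSubgroup a₁ ⊓ circleSubgroup a₂ = ⊥ ↔
      ∃ A : Matrix (Fin k) (Fin k) ℤ,
        (∀ i, A i ⟨0, by omega⟩ = a₁ i) ∧ (∀ i, A i ⟨1, by omega⟩ = a₂ i) ∧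
        (A.det = 1 ∨ A.det = -1) := by
  constructor
  · exact fun h => forward_dir hk h₁ h₂ h
  · rintro ⟨A, hA1, hA2, hdet⟩
    exact backward_dir hk A hA1 hA2 hdet
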